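/- Let A ∈ ℝ^{n×p} have nonzero columns a₁, …, a_p, let R ∈ ℝ^{n×n} be symmetric positive definite, Q = R⁻¹, x ∈ ℝ^p with x ≥ 0, I ⊆ {1, …, p}, and γ > 0. Set y := ∑_{i=1}^p x_i a_i/‖a_i‖_Q and z := ∑_{i∈I} x_i a_i/‖a_i‖_Q, and assume z ≠ 0 and ‖y‖_Q ≤ γ‖z‖_Q. Define R′ := (1/(1+3γ²))(R + 3 z zᵀ/‖z‖_Q²), which is symmetric positive definite, and Q′ := (R′)⁻¹. Then for every v ∈ ℝⁿ there exists μ ∈ ℝ^p with μ ≥ 0 such that ‖v + Aμ‖_Q ≤ ‖v‖_{Q′}. -/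

import Mathlib

open Matrix

noncomputable section

/-- `‖v‖_Q = √(vᵀ Q v)`, the norm induced by a symmetric positive definite `Q`. -/
noncomputable def Qnorm {n : ℕ} (Q : Matrix (Fin n) (Fin n) ℝ) (v : Fin n → ℝ) : ℝ :=
  Real.sqrt (v ⬝ᵥ Q.mulVec v)

/-- The rank-1 rescaled matrix `R' = (1/(1+3γ²)) (R + 3 z zᵀ/‖z‖_Q²)`, where
`Q = R⁻¹`. -/
noncomputable def rescaledRankOne {n : ℕ} (R : Matrix (Fin n) (Fin n) ℝ)
    (γ : ℝ) (z : Fin n → ℝ) : Matrix (Fin n) (Fin n) ℝ :=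
  (1 + 3 * γ ^ 2)⁻¹ • (R + (3 / (Qnorm R⁻¹ z) ^ 2) • vecMulVec z z)

section Helpers

variable {n : ℕ}

private lemma pb_vmv_mulVec (a b u : Fin n → ℝ) : (vecMulVec a b) *ᵥ u = (b ⬝ᵥ u) • a := by
  ext j; simp [vecMulVec_apply, mulVec, dotProduct, Finset.mul_sum, mul_assoc, mul_comm, mul_left_comm]

private lemma pb_mul_vmv (A : Matrix (Fin n) (Fin n) ℝ) (a b : Fin n → ℝ) :
    A * vecMulVec a b = vecMulVec (A *ᵥ a) b := by
  ext i j; simp [vecMulVec_apply, mul_apply, mulVec, dotProduct, Finset.sum_mul, mul_assoc]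

private lemma pb_vmv_mul (A : Matrix (Fin n) (Fin n) ℝ) (a b : Fin n → ℝ) :
    vecMulVec a b * A = vecMulVec a (Aᵀ *ᵥ b) := by
  ext i j; simp [vecMulVec_apply, mul_apply, mulVec, dotProduct, Finset.mul_sum, mul_assoc, mul_comm, mul_left_comm]

private lemma pb_vmv_mul_vmv (a b c d : Fin n → ℝ) :
    vecMulVec a b * vecMulVec c d = (b ⬝ᵥ c) • vecMulVec a d := by
  ext i j; simp [vecMulVec_apply, mul_apply, dotProduct, Finset.sum_mul, Finset.mul_sum]
  exact Finset.sum_congr rfl fun k _ => by ring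

private lemma pb_transpose {Q : Matrix (Fin n) (Fin n) ℝ} (hQ : Q.IsHermitian) : Qᵀ = Q := by
  rwa [IsHermitian, conjTranspose_eq_transpose_of_trivial] at hQ

private lemma pb_sym {Q : Matrix (Fin n) (Fin n) ℝ} (hQ : Q.IsHermitian) (a b : Fin n → ℝ) :
    a ⬝ᵥ Q *ᵥ b = b ⬝ᵥ Q *ᵥ a := by
  rw [dotProduct_mulVec, ← mulVec_transpose, pb_transpose hQ, dotProduct_comm]

private lemma pb_nonneg {Q : Matrix (Fin n) (Fin n) ℝ} (hQ : Q.PosDef) (u : Fin n → ℝ) :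
    0 ≤ u ⬝ᵥ Q *ᵥ u := by simpa using hQ.posSemidef.dotProduct_mulVec_nonneg u

private lemma pb_cs {Q : Matrix (Fin n) (Fin n) ℝ} (hQ : Q.PosDef) (a b : Fin n → ℝ) :
    (a ⬝ᵥ Q *ᵥ b)^2 ≤ (a ⬝ᵥ Q *ᵥ a) * (b ⬝ᵥ Q *ᵥ b) := by
  by_cases hb : b = 0
  · simp [hb]
  · have hbb : 0 < b ⬝ᵥ Q *ᵥ b := by simpa using hQ.dotProduct_mulVec_pos hb
    have key : 0 ≤ (a - ((a ⬝ᵥ Q *ᵥ b)/(b ⬝ᵥ Q *ᵥ b)) • b) ⬝ᵥ Q *ᵥ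
        (a - ((a ⬝ᵥ Q *ᵥ b)/(b ⬝ᵥ Q *ᵥ b)) • b) := pb_nonneg hQ _
    set c := (a ⬝ᵥ Q *ᵥ b)/(b ⬝ᵥ Q *ᵥ b) with hc
    rw [sub_dotProduct, mulVec_sub, dotProduct_sub, dotProduct_sub, smul_dotProduct,
      smul_dotProduct, mulVec_smul, dotProduct_smul, dotProduct_smul,
      pb_sym hQ.isHermitian b a] at key
    simp only [smul_eq_mul] at key
    have h2 : (a ⬝ᵥ Q *ᵥ b) = c * (b ⬝ᵥ Q *ᵥ b) := by rw [hc, div_mul_cancel₀ _ hbb.ne']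
    nlinarith [key, hbb]

private lemma pb_quad {Q : Matrix (Fin n) (Fin n) ℝ} (hQ : Q.IsHermitian)
    (v y z : Fin n → ℝ) (α τ : ℝ) :
    (v + α • y + τ • z) ⬝ᵥ Q *ᵥ (v + α • y + τ • z) =
      v ⬝ᵥ Q *ᵥ v + α^2*(y ⬝ᵥ Q *ᵥ y) + τ^2*(z ⬝ᵥ Q *ᵥ z)
        + 2*α*(v ⬝ᵥ Q *ᵥ y) + 2*τ*(v ⬝ᵥ Q *ᵥ z) + 2*α*τ*(y ⬝ᵥ Q *ᵥ z) := by
  simp only [dotProduct_add, add_dotProduct, mulVec_add, mulVec_smul, dotProduct_smul,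
    smul_dotProduct, smul_eq_mul, pb_sym hQ y v, pb_sym hQ z v, pb_sym hQ z y]
  ring

private lemma pb_lin {Q : Matrix (Fin n) (Fin n) ℝ}
    (v y z u : Fin n → ℝ) (α τ : ℝ) :
    (v + α • y + τ • z) ⬝ᵥ Q *ᵥ u =
      v ⬝ᵥ Q *ᵥ u + α*(y ⬝ᵥ Q *ᵥ u) + τ*(z ⬝ᵥ Q *ᵥ u) := by
  simp only [add_dotProduct, smul_dotProduct, smul_eq_mul]

private lemma pb_scalar1 (γ V2 s Z2 : ℝ) (hZ2 : 0 < Z2) (hγ : 0 < γ) (hcs : s^2 ≤ V2*Z2) :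
    V2 - s^2/Z2 ≤ (1+3*γ^2)*(V2 - 3/(4*Z2)*s^2) := by
  rw [← sub_nonneg]
  have hkey : (1+3*γ^2)*(V2 - 3/(4*Z2)*s^2) - (V2 - s^2/Z2)
      = (3*γ^2*(V2*Z2 - s^2) + (3/4)*γ^2*s^2 + s^2/4)/Z2 := by
    field_simp
    ring
  rw [hkey]
  apply div_nonneg _ hZ2.le
  nlinarith [sq_nonneg s, sq_nonneg γ, mul_nonneg (sq_nonneg γ) (sq_nonneg s)]

private lemma pb_scalar2 (γ V2 Y2 s w Z2 : ℝ) (hZ2 : 0 < Z2) (hγ : 0 < γ)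
    (hV2 : 0 ≤ V2) (hs : 0 < s) (hsw : s ≤ w)
    (hcsz : s^2 ≤ V2*Z2) (hcsy : w^2 ≤ V2*Y2) (hY : Y2 ≤ γ^2*Z2) :
    V2 ≤ (1+3*γ^2)*(V2 - 3/(4*Z2)*s^2) := by
  rw [← sub_nonneg]
  have hkey : (1+3*γ^2)*(V2 - 3/(4*Z2)*s^2) - V2
      = (3*γ^2*V2*Z2 - (3/4)*(1+3*γ^2)*s^2)/Z2 := by
    field_simp
    ring
  rw [hkey]
  apply div_nonneg _ hZ2.le
  have h1 : s^2 ≤ w^2 := by nlinarith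
  have h2 : s^2 ≤ γ^2*(V2*Z2) := by nlinarith [mul_le_mul_of_nonneg_left hY hV2]
  nlinarith [mul_le_mul_of_nonneg_left hcsz (sq_nonneg γ)]

set_option maxHeartbeats 1000000 in
private lemma pb_scalar3 (γ E2 t α Y2 Z2 k : ℝ) (hγ : 0 < γ) (hE2 : 0 ≤ E2) (hZ2 : 0 < Z2)
    (hqq : 0 < Y2 + Z2 - 2*k)
    (f2 : t^2 ≤ E2*Y2) (f3 : t^2*(Y2+Z2-2*k) ≤ E2*(Y2*Z2-k^2))
    (f4 : Y2 ≤ γ^2*Z2) (f5 : k^2 ≤ Y2*Z2) :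
    E2*Z2 ≤ (1+3*γ^2)*((E2+α^2*(Y2+Z2-2*k))*Z2 - 3/4*(t+α*(Z2-k))^2) := by
  set c := Z2 - k with hc
  set h := Y2*Z2 - k^2 with hh
  set F := E2*Z2 with hF
  have hhnn : 0 ≤ h := by simp only [hh]; linarith
  have hFnn : 0 ≤ F := mul_nonneg hE2 hZ2.le
  have hch : c^2 + h = (Y2+Z2-2*k)*Z2 := by simp only [hc, hh]; ring
  have hchpos : 0 < c^2 + h := by rw [hch]; exact mul_pos hqq hZ2
  have hg1 : (0:ℝ) < 1 + 3*γ^2 := by positivity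
  have hu1 : t^2 ≤ γ^2*F := by simp only [hF]; nlinarith
  have hu2 : t^2*(c^2+h) ≤ F*h := by
    rw [hch]; simp only [hF]; nlinarith
  have hW : 0 ≤ γ^2*F*c^2 + 4*(γ^2*F*h) - (1+3*γ^2)*(t^2*(c^2+h)) := by
    rcases le_or_gt h (γ^2*(c^2+h)) with hcase | hcase
    · nlinarith [mul_le_mul_of_nonneg_left hu2 hg1.le,
        mul_nonneg hFnn (by linarith : (0:ℝ) ≤ γ^2*(c^2+h) - h)]
    · nlinarith [mul_le_mul_of_nonneg_right hu1 hchpos.le,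
        mul_nonneg (mul_nonneg (by positivity : (0:ℝ) ≤ 3*γ^2) hFnn)
          (by linarith : (0:ℝ) ≤ h - γ^2*(c^2+h))]
  have hP4 : (0:ℝ) < 4*((1+3*γ^2)*(c^2+4*h)) := by nlinarith
  have key : 4*((1+3*γ^2)*(c^2+4*h))*((1+3*γ^2)*((E2+α^2*(Y2+Z2-2*k))*Z2 - 3/4*(t+α*(Z2-k))^2) - E2*Z2)
      = ((1+3*γ^2)*(c^2+4*h)*α - 3*(1+3*γ^2)*t*c)^2
        + 12*(1+3*γ^2)*(γ^2*F*c^2 + 4*(γ^2*F*h) - (1+3*γ^2)*(t^2*(c^2+h))) := by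
    simp only [hc, hh, hF]; ring
  have h4 : 4*((1+3*γ^2)*(c^2+4*h)) * (0:ℝ) ≤
      4*((1+3*γ^2)*(c^2+4*h))*((1+3*γ^2)*((E2+α^2*(Y2+Z2-2*k))*Z2 - 3/4*(t+α*(Z2-k))^2) - E2*Z2) := by
    rw [mul_zero, key]
    have := sq_nonneg ((1+3*γ^2)*(c^2+4*h)*α - 3*(1+3*γ^2)*t*c)
    nlinarith [hW, hg1]
  have := le_of_mul_le_mul_left h4 hP4
  linarith

end Helpers

set_option maxHeartbeats 2000000 in
/-- The rank-1 pull-back lemma: if `y = ∑_{i} x_i a_i/‖a_i‖_Q` and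
`z = ∑_{i ∈ I} x_i a_i/‖a_i‖_Q` satisfy `z ≠ 0` and `‖y‖_Q ≤ γ ‖z‖_Q`, then `R'`
is symmetric positive definite, and for every `v ∈ ℝⁿ` there exists `μ ≥ 0` with
`‖v + Aμ‖_Q ≤ ‖v‖_{Q'}`, where `Q' = (R')⁻¹`. -/
theorem pullback_rank_one {n p : ℕ}
    (A : Matrix (Fin n) (Fin p) ℝ)
    (hA : ∀ i : Fin p, (fun j => A j i) ≠ (0 : Fin n → ℝ))
    (R : Matrix (Fin n) (Fin n) ℝ) (hR : R.PosDef)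
    (x : Fin p → ℝ) (hx : ∀ i, 0 ≤ x i)
    (I : Finset (Fin p)) (γ : ℝ) (hγ : 0 < γ)
    (hz : (fun j => ∑ i ∈ I, x i * A j i / Qnorm R⁻¹ (fun j' => A j' i)) ≠
      (0 : Fin n → ℝ))
    (hyz : Qnorm R⁻¹ (fun j => ∑ i, x i * A j i / Qnorm R⁻¹ (fun j' => A j' i)) ≤
      γ * Qnorm R⁻¹
        (fun j => ∑ i ∈ I, x i * A j i / Qnorm R⁻¹ (fun j' => A j' i))) :
    (rescaledRankOne R γ
      (fun j => ∑ i ∈ I, x i * A j i / Qnorm R⁻¹ (fun j' => A j' i))).PosDef ∧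
    ∀ v : Fin n → ℝ, ∃ μ : Fin p → ℝ, (∀ i, 0 ≤ μ i) ∧
      Qnorm R⁻¹ (v + A.mulVec μ) ≤
        Qnorm (rescaledRankOne R γ
          (fun j => ∑ i ∈ I, x i * A j i / Qnorm R⁻¹ (fun j' => A j' i)))⁻¹ v := by
  classical
  set N : Fin p → ℝ := fun i => Qnorm R⁻¹ (fun j' => A j' i) with hN
  set z : Fin n → ℝ := fun j => ∑ i ∈ I, x i * A j i / N i with hzdef
  set y : Fin n → ℝ := fun j => ∑ i, x i * A j i / N i with hydef
  have hQ : (R⁻¹).PosDef := hR.inv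
  have hQH := hQ.isHermitian
  have hZ2pos : 0 < z ⬝ᵥ R⁻¹ *ᵥ z := by simpa using hQ.dotProduct_mulVec_pos hz
  set Z2 : ℝ := z ⬝ᵥ R⁻¹ *ᵥ z with hZ2def
  have hQn : (Qnorm R⁻¹ z)^2 = Z2 := Real.sq_sqrt (by simpa [Qnorm] using hZ2pos.le)
  have he : (0:ℝ) < 1 + 3*γ^2 := by positivity
  have hRe : ∀ i j, R j i = R i j := by
    intro i j
    have h := hR.1
    rw [IsHermitian, conjTranspose_eq_transpose_of_trivial] at h
    conv_rhs => rw [← h]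
    simp
  constructor
  · -- Positive definiteness of the rescaled matrix
    have hc : 0 ≤ 3 / (Qnorm R⁻¹ z) ^ 2 := by positivity
    have he' : (0:ℝ) < (1 + 3 * γ ^ 2)⁻¹ := by positivity
    refine PosDef.of_dotProduct_mulVec_pos ?_ ?_
    · show _ᴴ = _
      rw [conjTranspose_eq_transpose_of_trivial]
      ext i j
      simp only [rescaledRankOne, transpose_apply, Matrix.smul_apply, Matrix.add_apply, vecMulVec_apply,
        smul_eq_mul]
      rw [hRe i j]; ring
    · intro u hu
      have key : (rescaledRankOne R γ z) *ᵥ u =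
          (1 + 3*γ^2)⁻¹ • (R *ᵥ u + (3 / (Qnorm R⁻¹ z) ^ 2 * (z ⬝ᵥ u)) • z) := by
        simp only [rescaledRankOne, smul_mulVec, add_mulVec, pb_vmv_mulVec, smul_smul]
      rw [key]
      simp only [star_trivial, dotProduct_smul, dotProduct_add, smul_eq_mul]
      have h1 : 0 < u ⬝ᵥ R *ᵥ u := by simpa using hR.dotProduct_mulVec_pos hu
      have h2 : u ⬝ᵥ z = z ⬝ᵥ u := dotProduct_comm u z
      have h3 : 0 ≤ 3 / (Qnorm R⁻¹ z) ^ 2 * (z ⬝ᵥ u) * (u ⬝ᵥ z) := by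
        rw [h2, mul_assoc]; exact mul_nonneg hc (mul_self_nonneg _)
      have h4 : 0 < u ⬝ᵥ R *ᵥ u + 3 / (Qnorm R⁻¹ z) ^ 2 * (z ⬝ᵥ u) * (u ⬝ᵥ z) := by linarith
      exact mul_pos he' h4
  · -- the pull-back estimate
    intro v
    -- the inverse of the rescaled matrix
    have hdet : IsUnit R.det := hR.det_pos.ne'.isUnit
    have hQt : (R⁻¹)ᵀ = R⁻¹ := pb_transpose hQ.isHermitian
    have hinv : (rescaledRankOne R γ z)⁻¹ =
        (1 + 3*γ^2) • (R⁻¹ - (3 / (4 * Z2)) • vecMulVec (R⁻¹ *ᵥ z) (R⁻¹ *ᵥ z)) := by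
      apply inv_eq_right_inv
      rw [rescaledRankOne, hQn, Matrix.smul_mul, Matrix.mul_smul, smul_smul,
        inv_mul_cancel₀ he.ne', one_smul]
      rw [Matrix.add_mul, Matrix.mul_sub, Matrix.mul_smul, Matrix.smul_mul, Matrix.mul_sub,
        Matrix.mul_smul, Matrix.mul_nonsing_inv _ hdet, pb_mul_vmv, mulVec_mulVec,
        Matrix.mul_nonsing_inv _ hdet, one_mulVec, pb_vmv_mul, hQt, pb_vmv_mul_vmv,
        smul_smul]
      have hzz : z ⬝ᵥ R⁻¹ *ᵥ z = Z2 := rfl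
      rw [hzz]
      have hco2 : (3 / Z2) - (3 / Z2 * (3 / (4 * Z2) * Z2)) - 3 / (4 * Z2) = 0 := by
        field_simp; ring
      have hgen : ∀ (V : Matrix (Fin n) (Fin n) ℝ) (a b c : ℝ),
          1 - a • V + b • (V - c • V) = 1 + (b - b*c - a) • V := by
        intro V a b c; module
      rw [hgen]
      have hco2' : 3 / Z2 - 3 / Z2 * (3 / (4 * Z2) * Z2) - 3 / (4 * Z2) = 0 := hco2
      rw [hco2', zero_smul, add_zero]
    -- scalar quantities
    set V2 : ℝ := v ⬝ᵥ R⁻¹ *ᵥ v with hV2def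
    set Y2 : ℝ := y ⬝ᵥ R⁻¹ *ᵥ y with hY2def
    set s : ℝ := v ⬝ᵥ R⁻¹ *ᵥ z with hsdef
    set w : ℝ := v ⬝ᵥ R⁻¹ *ᵥ y with hwdef
    set k : ℝ := y ⬝ᵥ R⁻¹ *ᵥ z with hkdef
    have hV2nn : 0 ≤ V2 := pb_nonneg hQ v
    have hY2nn : 0 ≤ Y2 := pb_nonneg hQ y
    have hcsz : s^2 ≤ V2*Z2 := pb_cs hQ v z
    have hcsy : w^2 ≤ V2*Y2 := pb_cs hQ v y
    have hcsk : k^2 ≤ Y2*Z2 := pb_cs hQ y z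
    have f4 : Y2 ≤ γ^2*Z2 := by
      have h1 : Real.sqrt Y2 ≤ γ * Real.sqrt Z2 := by
        simpa [Qnorm, hY2def, hZ2def] using hyz
      have h2 := mul_self_le_mul_self (Real.sqrt_nonneg Y2) h1
      have h3 : Real.sqrt Y2 * Real.sqrt Y2 = Y2 := Real.mul_self_sqrt hY2nn
      have h4 : Real.sqrt Z2 * Real.sqrt Z2 = Z2 := Real.mul_self_sqrt hZ2pos.le
      nlinarith [h2, h3, h4]
    -- the right-hand side norm
    have hRHS : Qnorm (rescaledRankOne R γ z)⁻¹ v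
        = Real.sqrt ((1+3*γ^2)*(V2 - 3/(4*Z2)*s^2)) := by
      rw [Qnorm, hinv]
      congr 1
      rw [smul_mulVec, sub_mulVec, smul_mulVec, pb_vmv_mulVec]
      have h5 : (R⁻¹ *ᵥ z) ⬝ᵥ v = s := by rw [dotProduct_comm]
      rw [h5]
      simp only [dotProduct_smul, dotProduct_sub, smul_eq_mul, dotProduct_smul]
      have h6 : v ⬝ᵥ (R⁻¹ *ᵥ z) = s := rfl
      rw [h6]
      ring
    -- construction of μ from coefficients α, τ
    have hμex : ∀ α τ : ℝ, 0 ≤ α → 0 ≤ α + τ →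
        ∃ μ : Fin p → ℝ, (∀ i, 0 ≤ μ i) ∧ A *ᵥ μ = α • y + τ • z := by
      intro α τ hα hατ
      refine ⟨fun i => (α + if i ∈ I then τ else 0) * (x i / N i), ?_, ?_⟩
      · intro i
        have hNn : 0 ≤ N i := by rw [hN]; exact Real.sqrt_nonneg _
        have : 0 ≤ α + if i ∈ I then τ else 0 := by
          by_cases hi : i ∈ I <;> simp [hi] <;> linarith
        exact mul_nonneg this (div_nonneg (hx i) hNn)
      · ext j
        have h8 : (α • y + τ • z) j = α * y j + τ * z j := rfl
        rw [h8, hydef, hzdef]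
        simp only [mulVec, dotProduct]
        rw [Finset.mul_sum, Finset.mul_sum]
        rw [show (∑ i ∈ I, τ * (x i * A j i / N i))
            = ∑ i : Fin p, if i ∈ I then τ * (x i * A j i / N i) else 0 by
          rw [Finset.sum_ite_mem, Finset.univ_inter]]
        rw [← Finset.sum_add_distrib]
        refine Finset.sum_congr rfl fun i _ => ?_
        by_cases hi : i ∈ I <;> simp [hi] <;> ring
    -- reduce to a scalar inequality
    have main : ∀ α τ : ℝ, 0 ≤ α → 0 ≤ α + τ →
        ((v + α • y + τ • z) ⬝ᵥ R⁻¹ *ᵥ (v + α • y + τ • z) ≤ (1+3*γ^2)*(V2 - 3/(4*Z2)*s^2)) →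
        ∃ μ : Fin p → ℝ, (∀ i, 0 ≤ μ i) ∧
          Qnorm R⁻¹ (v + A.mulVec μ) ≤ Qnorm (rescaledRankOne R γ z)⁻¹ v := by
      intro α τ hα hατ hineq
      obtain ⟨μ, hμnn, hAμ⟩ := hμex α τ hα hατ
      refine ⟨μ, hμnn, ?_⟩
      rw [hRHS]
      have h9 : A.mulVec μ = A *ᵥ μ := rfl
      rw [h9, hAμ, Qnorm]
      have h10 : v + (α • y + τ • z) = v + α • y + τ • z := by rw [add_assoc]
      rw [h10]
      exact Real.sqrt_le_sqrt hineq
    -- case analysis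
    rcases le_or_gt s 0 with hs | hs
    · -- case s ≤ 0 : α = 0, τ = -s/Z2
      refine main 0 (-(s/Z2)) le_rfl (by rw [zero_add, neg_nonneg]; exact div_nonpos_of_nonpos_of_nonneg hs hZ2pos.le) ?_
      rw [pb_quad hQH]
      have h11 : V2 + 0^2*Y2 + (-(s/Z2))^2*Z2 + 2*0*w + 2*(-(s/Z2))*s + 2*0*(-(s/Z2))*k
          = V2 - s^2/Z2 := by field_simp; ring
      rw [h11]
      exact pb_scalar1 γ V2 s Z2 hZ2pos hγ hcsz
    rcases le_or_gt s w with hsw | hsw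
    · -- case 0 < s ≤ w : μ = 0
      refine main 0 0 le_rfl (by norm_num) ?_
      rw [pb_quad hQH]
      have h12 : V2 + 0^2*Y2 + 0^2*Z2 + 2*0*w + 2*0*s + 2*0*0*k = V2 := by ring
      rw [h12]
      exact pb_scalar2 γ V2 Y2 s w Z2 hZ2pos hγ hV2nn hs hsw hcsz hcsy f4
    · -- case 0 < s, w < s : move along y - z
      set qq : ℝ := Y2 + Z2 - 2*k with hqqdef
      have hyzsub : (y - z) ⬝ᵥ R⁻¹ *ᵥ (y - z) = qq := by
        rw [sub_dotProduct, mulVec_sub, dotProduct_sub, dotProduct_sub,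
          pb_sym hQH z y]
        rw [hqqdef, hY2def, hZ2def, hkdef]
        ring
      have hynez : y - z ≠ 0 := by
        intro h0
        have hyeq : y = z := sub_eq_zero.mp h0
        have : w = s := by rw [hwdef, hsdef, hyeq]
        linarith
      have hqqpos : 0 < qq := by
        rw [← hyzsub]
        simpa using hQ.dotProduct_mulVec_pos hynez
      set α : ℝ := (s - w)/qq with hαdef
      have hαnn : 0 ≤ α := by
        apply div_nonneg _ hqqpos.le
        linarith
      have hαqq : α * qq = s - w := div_mul_cancel₀ _ hqqpos.ne'
      refine main α (-α) hαnn (by linarith) ?_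
      -- the vector e = v + α•y - α•z
      set e : Fin n → ℝ := v + α • y + (-α) • z with hedef
      set E2 : ℝ := e ⬝ᵥ R⁻¹ *ᵥ e with hE2def
      set t : ℝ := e ⬝ᵥ R⁻¹ *ᵥ z with htdef
      have hE2nn : 0 ≤ E2 := pb_nonneg hQ e
      have ht : t = s + α*k + (-α)*Z2 := by
        rw [htdef, hedef, pb_lin]
      have hey : e ⬝ᵥ R⁻¹ *ᵥ y = t := by
        rw [hedef, pb_lin, ht]
        have hky : z ⬝ᵥ R⁻¹ *ᵥ y = k := pb_sym hQH z y
        rw [hky]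
        have hYY : y ⬝ᵥ R⁻¹ *ᵥ y = Y2 := rfl
        have hw2 : v ⬝ᵥ R⁻¹ *ᵥ y = w := rfl
        rw [hYY, hw2]
        linear_combination hαqq
      have hE2quad : E2 = V2 + α^2*Y2 + (-α)^2*Z2 + 2*α*w + 2*(-α)*s + 2*α*(-α)*k := by
        rw [hE2def, hedef, pb_quad hQH]
      have f2 : t^2 ≤ E2*Y2 := by
        have := pb_cs hQ e y
        rwa [hey] at this
      have f3 : t^2*qq ≤ E2*(Y2*Z2 - k^2) := by
        have hcse := pb_cs hQ e ((0 : Fin n → ℝ) + (Z2-k) • y + (Y2-k) • z)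
        have hlin2 : e ⬝ᵥ R⁻¹ *ᵥ ((0 : Fin n → ℝ) + (Z2-k) • y + (Y2-k) • z) = qq * t := by
          simp only [mulVec_add, mulVec_smul, dotProduct_add, dotProduct_smul,
            mulVec_zero, dotProduct_zero, smul_eq_mul]
          rw [hey]
          rw [show e ⬝ᵥ R⁻¹ *ᵥ z = t from rfl]
          ring
        have hquadu : ((0 : Fin n → ℝ) + (Z2-k) • y + (Y2-k) • z) ⬝ᵥ R⁻¹ *ᵥ
            ((0 : Fin n → ℝ) + (Z2-k) • y + (Y2-k) • z) = (Y2*Z2 - k^2)*qq := by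
          rw [pb_quad hQH]
          simp only [zero_dotProduct, mul_zero, add_zero, zero_add]
          rw [show y ⬝ᵥ R⁻¹ *ᵥ y = Y2 from rfl, show z ⬝ᵥ R⁻¹ *ᵥ z = Z2 from rfl,
            show y ⬝ᵥ R⁻¹ *ᵥ z = k from rfl]
          ring
        rw [hlin2, hquadu] at hcse
        have hcse' : (qq*t)^2 ≤ E2*((Y2*Z2 - k^2)*qq) := hcse
        have h1 : (t^2*qq)*qq ≤ (E2*(Y2*Z2-k^2))*qq := by
          calc (t^2*qq)*qq = (qq*t)^2 := by ring
            _ ≤ E2*((Y2*Z2-k^2)*qq) := hcse'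
            _ = (E2*(Y2*Z2-k^2))*qq := by ring
        exact le_of_mul_le_mul_right h1 hqqpos
      have hgoal := pb_scalar3 γ E2 t α Y2 Z2 k hγ hE2nn hZ2pos (by exact hqqpos)
        f2 (by exact f3) f4 hcsk
      have hαqq' : α*(Y2+Z2-2*k) = s - w := hαqq
      have hVeq : E2 + α^2*(Y2+Z2-2*k) = V2 := by
        linear_combination hE2quad + (2*α) * hαqq'
      have hseq : t + α*(Z2 - k) = s := by rw [ht]; ring
      rw [hVeq, hseq] at hgoal
      -- conclude by dividing by Z2
      show E2 ≤ (1+3*γ^2)*(V2 - 3/(4*Z2)*s^2)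
      have hdiv : (1+3*γ^2)*(V2 - 3/(4*Z2)*s^2)*Z2 = (1+3*γ^2)*(V2*Z2 - 3/4*s^2) := by
        field_simp
      have h13 : E2 * Z2 ≤ (1+3*γ^2)*(V2 - 3/(4*Z2)*s^2)*Z2 := by
        rw [hdiv]; exact hgoal
      exact le_of_mul_le_mul_right h13 hZ2pos
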